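/- Let γ^{(5)} = {γ_{ij}}_{i+j ≤ 5} admit a representing measure μ on ℂ. Then the column space of the 6×4 matrix B (whose columns are the degree-3 moment columns B_{Z³}, B_{conj(Z)Z²}, B_{conj(Z)²Z}, B_{conj(Z)³} built from moments of degree 3, 4, 5) is contained in the column space of M(2); equivalently, there exists a matrix W with B = M(2) W. -/

import Mathlib

open MeasureTheory ComplexConjugate

/-- Linear algebra: for a Hermitian complex matrix `A`, any vector orthogonal to
the kernel of `A` lies in the range of `A`. -/
lemma herm_range_of_ker {n : ℕ} (A : Matrix (Fin n) (Fin n) ℂ) (hA : A.conjTranspose = A)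
    (b : Fin n → ℂ) (hb : ∀ v : Fin n → ℂ, A.mulVec v = 0 → dotProduct (star v) b = 0) :
    ∃ w : Fin n → ℂ, A.mulVec w = b := by
  classical
  set T : EuclideanSpace ℂ (Fin n) →ₗ[ℂ] EuclideanSpace ℂ (Fin n) := Matrix.toEuclideanLin A with hT
  have hadj : LinearMap.adjoint T = T := by
    rw [hT, ← Matrix.toEuclideanLin_conjTranspose_eq_adjoint, hA]
  -- (range T)ᗮ = ker T
  have hker : (LinearMap.range T)ᗮ = LinearMap.ker T := by
    ext v
    simp only [Submodule.mem_orthogonal, LinearMap.mem_range, LinearMap.mem_ker]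
    constructor
    · intro h
      have h2 : ∀ x, (inner ℂ (T x) v : ℂ) = 0 := fun x => h (T x) ⟨x, rfl⟩
      have h4 := LinearMap.adjoint_inner_right T (T v) v
      rw [hadj] at h4
      have h5 : (inner ℂ (T v) (T v) : ℂ) = 0 := by rw [h4]; exact h2 (T v)
      rwa [inner_self_eq_zero] at h5
    · rintro h u ⟨x, rfl⟩
      have h4 := LinearMap.adjoint_inner_right T v x
      rw [hadj] at h4
      rw [← inner_conj_symm, h4, h, inner_zero_left, map_zero]
  have hrange : (LinearMap.ker T)ᗮ = LinearMap.range T := by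
    rw [← hker, Submodule.orthogonal_orthogonal]
  set b' : EuclideanSpace ℂ (Fin n) := (WithLp.equiv 2 _).symm b with hb'
  have hbmem : b' ∈ (LinearMap.ker T)ᗮ := by
    intro v hv
    have hv0 : A.mulVec (WithLp.equiv 2 _ v) = 0 := by
      have : T v = 0 := hv
      have h2 := congrArg (WithLp.equiv 2 (Fin n → ℂ)) this
      exact h2
    have := hb (WithLp.equiv 2 _ v) hv0
    rw [EuclideanSpace.inner_eq_star_dotProduct]
    rw [dotProduct_comm]
    simpa [hb'] using this
  rw [hrange] at hbmem
  obtain ⟨w, hw⟩ := hbmem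
  refine ⟨WithLp.equiv 2 _ w, ?_⟩
  have := congrArg (WithLp.equiv 2 (Fin n → ℂ)) hw
  exact this

/-- Analytic key lemma. -/
lemma moment_key (μ : Measure ℂ)
    (hint : ∀ i j, i + j ≤ 5 →
      Integrable (fun z : ℂ => ((starRingEnd ℂ) z) ^ i * z ^ j) μ)
    {n : ℕ} (e : Fin n → ℕ × ℕ) (he : ∀ k, (e k).1 + (e k).2 ≤ 2)
    (fj : ℕ × ℕ) (hf : fj.1 + fj.2 ≤ 3) (v : Fin n → ℂ)
    (hv : ∀ k, ∑ l, (∫ z : ℂ, ((starRingEnd ℂ) z) ^ ((e k).2 + (e l).1) *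
        z ^ ((e k).1 + (e l).2) ∂μ) * v l = 0) :
    ∑ k, conj (v k) * ∫ z : ℂ, ((starRingEnd ℂ) z) ^ ((e k).2 + fj.1) *
        z ^ ((e k).1 + fj.2) ∂μ = 0 := by
  classical
  set c : ℂ →+* ℂ := starRingEnd ℂ with hc
  set p : ℂ → ℂ := fun z => ∑ k, v k * (c z ^ (e k).1 * z ^ (e k).2) with hp
  have hpt : ∀ z : ℂ, conj (p z) * p z =
      ∑ k, ∑ l, conj (v k) * v l *
        (c z ^ ((e k).2 + (e l).1) * z ^ ((e k).1 + (e l).2)) := by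
    intro z
    rw [hp]
    simp only
    rw [map_sum, Finset.sum_mul_sum]
    refine Finset.sum_congr rfl fun k _ => Finset.sum_congr rfl fun l _ => ?_
    simp only [map_mul, map_pow, hc, Complex.conj_conj, pow_add]
    ring
  have hint2 : ∀ k l : Fin n, Integrable (fun z : ℂ =>
      conj (v k) * v l * (c z ^ ((e k).2 + (e l).1) * z ^ ((e k).1 + (e l).2))) μ := by
    intro k l
    exact (hint _ _ (by have := he k; have := he l; omega)).const_mul _
  have hg_eq : (fun z : ℂ => conj (p z) * p z) = fun z =>
      ∑ k, ∑ l, conj (v k) * v l *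
        (c z ^ ((e k).2 + (e l).1) * z ^ ((e k).1 + (e l).2)) := funext hpt
  have hg_int : Integrable (fun z : ℂ => conj (p z) * p z) μ := by
    rw [hg_eq]
    exact integrable_finset_sum _ fun k _ => integrable_finset_sum _ fun l _ => hint2 k l
  have hI0 : ∫ z, conj (p z) * p z ∂μ = 0 := by
    rw [hg_eq, integral_finset_sum _ fun k _ => integrable_finset_sum _ fun l _ => hint2 k l]
    refine Finset.sum_eq_zero fun k _ => ?_
    rw [integral_finset_sum _ fun l _ => hint2 k l]
    have : ∀ l ∈ Finset.univ, (∫ z, conj (v k) * v l *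
        (c z ^ ((e k).2 + (e l).1) * z ^ ((e k).1 + (e l).2)) ∂μ) =
        conj (v k) * ((∫ z, c z ^ ((e k).2 + (e l).1) * z ^ ((e k).1 + (e l).2) ∂μ) * v l) := by
      intro l _
      rw [integral_const_mul]
      ring
    rw [Finset.sum_congr rfl this, ← Finset.mul_sum, hv k, mul_zero]
  have hg_eq2 : (fun z : ℂ => conj (p z) * p z) =
      fun z => ((Complex.normSq (p z) : ℝ) : ℂ) := by
    funext z
    rw [mul_comm, Complex.mul_conj]
  have hre_int : Integrable (fun z : ℂ => Complex.normSq (p z)) μ := by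
    have h1 := hg_int
    rw [hg_eq2] at h1
    have h2 := h1.re
    simpa using h2
  have h00 : ∫ z, Complex.normSq (p z) ∂μ = 0 := by
    have h1 := hI0
    rw [hg_eq2] at h1
    have h2 : ∫ z : ℂ, ((Complex.normSq (p z) : ℝ) : ℂ) ∂μ =
        ((∫ z : ℂ, Complex.normSq (p z) ∂μ : ℝ) : ℂ) := integral_ofReal
    rw [h2] at h1
    exact_mod_cast h1
  have hae : (fun z : ℂ => Complex.normSq (p z)) =ᵐ[μ] 0 :=
    (integral_eq_zero_iff_of_nonneg (fun z => Complex.normSq_nonneg _) hre_int).mp h00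
  have hp0 : p =ᵐ[μ] 0 := by
    filter_upwards [hae] with z hz
    simpa using Complex.normSq_eq_zero.mp hz
  -- now the column computation
  have hq_int : ∀ k : Fin n, Integrable (fun z : ℂ =>
      conj (v k) * (c z ^ ((e k).2 + fj.1) * z ^ ((e k).1 + fj.2))) μ := by
    intro k
    exact (hint _ _ (by have := he k; omega)).const_mul _
  have hpt2 : ∀ z : ℂ, conj (p z) * (c z ^ fj.1 * z ^ fj.2) =
      ∑ k, conj (v k) * (c z ^ ((e k).2 + fj.1) * z ^ ((e k).1 + fj.2)) := by
    intro z
    rw [hp]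
    simp only
    rw [map_sum, Finset.sum_mul]
    refine Finset.sum_congr rfl fun k _ => ?_
    simp only [map_mul, map_pow, hc, Complex.conj_conj, pow_add]
    ring
  calc ∑ k, conj (v k) * ∫ z : ℂ, c z ^ ((e k).2 + fj.1) * z ^ ((e k).1 + fj.2) ∂μ
      = ∑ k, ∫ z : ℂ, conj (v k) * (c z ^ ((e k).2 + fj.1) * z ^ ((e k).1 + fj.2)) ∂μ := by
        exact Finset.sum_congr rfl fun k _ => (integral_const_mul _ _).symm
    _ = ∫ z : ℂ, ∑ k, conj (v k) * (c z ^ ((e k).2 + fj.1) * z ^ ((e k).1 + fj.2)) ∂μ :=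
        (integral_finset_sum _ fun k _ => hq_int k).symm
    _ = ∫ z : ℂ, conj (p z) * (c z ^ fj.1 * z ^ fj.2) ∂μ := by
        refine integral_congr_ae (Filter.Eventually.of_forall fun z => (hpt2 z).symm)
    _ = 0 := by
        rw [show (0 : ℂ) = ∫ _ : ℂ, (0 : ℂ) ∂μ by simp]
        refine integral_congr_ae ?_
        filter_upwards [hp0] with z hz
        simp [hz]


/-- If the quintic bi-sequence `γ` has a representing measure `μ`, then the
column space of the degree-3 moment block `B` is contained in the column space
of `M(2)`: there is a matrix `W` with `B = M(2) * W`. -/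
theorem quintic_range_inclusion (γ : ℕ → ℕ → ℂ) (μ : Measure ℂ)
    (hsym : ∀ i j, i + j ≤ 5 → (starRingEnd ℂ) (γ i j) = γ j i)
    (hint : ∀ i j, i + j ≤ 5 →
      Integrable (fun z : ℂ => ((starRingEnd ℂ) z) ^ i * z ^ j) μ)
    (hrep : ∀ i j, i + j ≤ 5 →
      γ i j = ∫ z, ((starRingEnd ℂ) z) ^ i * z ^ j ∂μ)
    (M : Matrix (Fin 6) (Fin 6) ℂ) (B : Matrix (Fin 6) (Fin 4) ℂ)
    (hM : M = !![γ 0 0, γ 0 1, γ 1 0, γ 0 2, γ 1 1, γ 2 0;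
                 γ 1 0, γ 1 1, γ 2 0, γ 1 2, γ 2 1, γ 3 0;
                 γ 0 1, γ 0 2, γ 1 1, γ 0 3, γ 1 2, γ 2 1;
                 γ 2 0, γ 2 1, γ 3 0, γ 2 2, γ 3 1, γ 4 0;
                 γ 1 1, γ 1 2, γ 2 1, γ 1 3, γ 2 2, γ 3 1;
                 γ 0 2, γ 0 3, γ 1 2, γ 0 4, γ 1 3, γ 2 2])
    (hB : B = !![γ 0 3, γ 1 2, γ 2 1, γ 3 0;
                 γ 1 3, γ 2 2, γ 3 1, γ 4 0;
                 γ 0 4, γ 1 3, γ 2 2, γ 3 1;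
                 γ 2 3, γ 3 2, γ 4 1, γ 5 0;
                 γ 1 4, γ 2 3, γ 3 2, γ 4 1;
                 γ 0 5, γ 1 4, γ 2 3, γ 3 2]) :
    ∃ W : Matrix (Fin 6) (Fin 4) ℂ, B = M * W := by
  classical
  set e : Fin 6 → ℕ × ℕ := ![(0,0),(0,1),(1,0),(0,2),(1,1),(2,0)] with he_def
  set f : Fin 4 → ℕ × ℕ := ![(0,3),(1,2),(2,1),(3,0)] with hf_def
  have hdeg_e : ∀ k, (e k).1 + (e k).2 ≤ 2 := by decide
  have hdeg_f : ∀ j, (f j).1 + (f j).2 ≤ 3 := by decide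
  have hMe : ∀ k l, M k l = γ ((e k).2 + (e l).1) ((e k).1 + (e l).2) := by
    subst hM; intro k l
    fin_cases k <;> fin_cases l <;> rfl
  have hBe : ∀ k j, B k j = γ ((e k).2 + (f j).1) ((e k).1 + (f j).2) := by
    subst hB; intro k j
    fin_cases k <;> fin_cases j <;> rfl
  have hHerm : M.conjTranspose = M := by
    ext i j
    rw [Matrix.conjTranspose_apply, hMe j i, hMe i j]
    have h := hsym ((e i).2 + (e j).1) ((e i).1 + (e j).2)
      (by have := hdeg_e i; have := hdeg_e j; omega)
    calc star (γ ((e j).2 + (e i).1) ((e j).1 + (e i).2))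
        = (starRingEnd ℂ) (γ ((e i).1 + (e j).2) ((e i).2 + (e j).1)) := by
          rw [add_comm (e j).2 (e i).1, add_comm (e j).1 (e i).2]; rfl
      _ = γ ((e i).2 + (e j).1) ((e i).1 + (e j).2) :=
          hsym _ _ (by have := hdeg_e i; have := hdeg_e j; omega)
  have hcol : ∀ j : Fin 4, ∃ w : Fin 6 → ℂ, M.mulVec w = fun k => B k j := by
    intro j
    refine herm_range_of_ker M hHerm _ ?_
    intro v hv0
    -- turn kernel condition into moment form
    have hv : ∀ k : Fin 6, ∑ l, (∫ z : ℂ, ((starRingEnd ℂ) z) ^ ((e k).2 + (e l).1) *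
        z ^ ((e k).1 + (e l).2) ∂μ) * v l = 0 := by
      intro k
      have h0 : ∑ l, M k l * v l = 0 := congrFun hv0 k
      rw [← h0]
      refine Finset.sum_congr rfl fun l _ => ?_
      rw [hMe k l, hrep _ _ (by have := hdeg_e k; have := hdeg_e l; omega)]
    have hkey := moment_key μ hint e hdeg_e (f j) (hdeg_f j) v hv
    calc dotProduct (star v) (fun k => B k j)
        = ∑ k, (starRingEnd ℂ) (v k) * B k j := rfl
      _ = ∑ k, (starRingEnd ℂ) (v k) * ∫ z : ℂ, ((starRingEnd ℂ) z) ^ ((e k).2 + (f j).1) *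
            z ^ ((e k).1 + (f j).2) ∂μ := by
          refine Finset.sum_congr rfl fun k _ => ?_
          rw [hBe k j, hrep _ _ (by have := hdeg_e k; have := hdeg_f j; omega)]
      _ = 0 := hkey
  choose w hw using hcol
  refine ⟨fun k j => w j k, ?_⟩
  refine Matrix.ext fun k j => ?_
  have h := congrFun (hw j) k
  show B k j = ∑ l, M k l * w j l
  rw [← h]
  rfl
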